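/- Let Γ be a connected (G,3)-CH graph which is not complete multipartite, and let N ⊴ G have at least three orbits on the vertex set. Then for every edge {u,v} of Γ, the N-orbit of v meets the neighbourhood Γ(u) in exactly the single vertex v; consequently Γ is a cover of the quotient graph Γ_N and N is semiregular on the vertices. -/

import Mathlib

open SimpleGraph

variable {V : Type*}

/-- `Γ` is `(G,3)`-connected-homogeneous: every isomorphism between connected induced
subgraphs of order at most 3 extends to an automorphism in `G`. -/
def IsCH3 (Γ : SimpleGraph V) (G : Subgroup (Γ ≃g Γ)) : Prop :=
  ∀ (A B : Set V), A.ncard ≤ 3 → (SimpleGraph.induce A Γ).Connected →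
    ∀ φ : (SimpleGraph.induce A Γ) ≃g (SimpleGraph.induce B Γ),
      ∃ g ∈ G, ∀ a : A, (g : Γ ≃g Γ) a.1 = ((φ a) : V)

/-- `G` is transitive on the vertices of `Γ`. -/
def VertexTrans (Γ : SimpleGraph V) (G : Subgroup (Γ ≃g Γ)) : Prop :=
  ∀ u v : V, ∃ g ∈ G, (g : Γ ≃g Γ) u = v

/-- The stabiliser of `u` in `G` is transitive on the neighbourhood of `u`. -/
def StabTrans (Γ : SimpleGraph V) (G : Subgroup (Γ ≃g Γ)) (u : V) : Prop :=
  ∀ v ∈ Γ.neighborSet u, ∀ w ∈ Γ.neighborSet u,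
    ∃ g ∈ G, (g : Γ ≃g Γ) u = u ∧ (g : Γ ≃g Γ) v = w

/-- The stabiliser of `u` in `G` is 2-transitive on the neighbourhood of `u`. -/
def Stab2Trans (Γ : SimpleGraph V) (G : Subgroup (Γ ≃g Γ)) (u : V) : Prop :=
  StabTrans Γ G u ∧
  ∀ v w v' w', v ∈ Γ.neighborSet u → w ∈ Γ.neighborSet u →
    v' ∈ Γ.neighborSet u → w' ∈ Γ.neighborSet u → v ≠ w → v' ≠ w' →
    ∃ g ∈ G, (g : Γ ≃g Γ) u = u ∧ (g : Γ ≃g Γ) v = v' ∧ (g : Γ ≃g Γ) w = w'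

/-- Two ordered pairs are equivalent under the stabiliser of `u` in `G`. -/
def PairEquiv (Γ : SimpleGraph V) (G : Subgroup (Γ ≃g Γ)) (u : V) (p q : V × V) : Prop :=
  ∃ g ∈ G, (g : Γ ≃g Γ) u = u ∧ (g : Γ ≃g Γ) p.1 = q.1 ∧ (g : Γ ≃g Γ) p.2 = q.2

/-- The stabiliser of `u` in `G` induces on the neighbourhood of `u` a transitive group
of rank 3: it is transitive, and it has exactly three orbits on ordered pairs of
neighbours of `u`. -/
def StabRank3 (Γ : SimpleGraph V) (G : Subgroup (Γ ≃g Γ)) (u : V) : Prop :=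
  StabTrans Γ G u ∧
  ∃ p₁ p₂ p₃ : V × V,
    (p₁.1 ∈ Γ.neighborSet u ∧ p₁.2 ∈ Γ.neighborSet u) ∧
    (p₂.1 ∈ Γ.neighborSet u ∧ p₂.2 ∈ Γ.neighborSet u) ∧
    (p₃.1 ∈ Γ.neighborSet u ∧ p₃.2 ∈ Γ.neighborSet u) ∧
    ¬ PairEquiv Γ G u p₁ p₂ ∧ ¬ PairEquiv Γ G u p₁ p₃ ∧ ¬ PairEquiv Γ G u p₂ p₃ ∧
    ∀ q : V × V, q.1 ∈ Γ.neighborSet u → q.2 ∈ Γ.neighborSet u →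
      PairEquiv Γ G u p₁ q ∨ PairEquiv Γ G u p₂ q ∨ PairEquiv Γ G u p₃ q

/-- A graph is complete multipartite iff non-adjacency is transitive. -/
def IsCompleteMultipartite (Γ : SimpleGraph V) : Prop :=
  Transitive fun x y => ¬ Γ.Adj x y

/-- The disjoint union `rKℓ` of `r` complete graphs on `ℓ` vertices. -/
def cliquesGraph (r ℓ : ℕ) : SimpleGraph (Fin r × Fin ℓ) where
  Adj x y := x.1 = y.1 ∧ x.2 ≠ y.2
  symm := ⟨fun x y h => ⟨h.1.symm, h.2.symm⟩⟩
  loopless := ⟨fun x h => h.2 rfl⟩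

variable {V : Type*}

/-- The partition of the vertex set into `N`-orbits. -/
def orbSetoid {Γ : SimpleGraph V} (N : Subgroup (Γ ≃g Γ)) : Setoid V where
  r v w := ∃ n ∈ N, (n : Γ ≃g Γ) v = w
  iseqv := by
    refine ⟨fun v => ⟨1, N.one_mem, rfl⟩, ?_, ?_⟩
    · rintro v w ⟨n, hn, h⟩
      exact ⟨n⁻¹, N.inv_mem hn, by subst h; exact n.symm_apply_apply v⟩
    · rintro u v w ⟨n, hn, h⟩ ⟨m, hm, h'⟩
      exact ⟨m * n, N.mul_mem hm hn, by simp only [← h', ← h]; rfl⟩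

/-- The quotient graph `Γ_N` of `Γ` with respect to the orbits of `N`. -/
def quotGraph (Γ : SimpleGraph V) (N : Subgroup (Γ ≃g Γ)) :
    SimpleGraph (Quotient (orbSetoid N)) where
  Adj B C := B ≠ C ∧ ∃ u v : V, Γ.Adj u v ∧ Quotient.mk _ u = B ∧ Quotient.mk _ v = C
  symm := ⟨by rintro B C ⟨h, u, v, ha, hu, hv⟩; exact ⟨h.symm, v, u, ha.symm, hv, hu⟩⟩
  loopless := ⟨fun B h => h.1 rfl⟩

lemma pair_ncard (a b : V) : ({a, b} : Set V).ncard ≤ 3 := by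
  calc ({a, b} : Set V).ncard ≤ ({b} : Set V).ncard + 1 := Set.ncard_insert_le _ _
    _ ≤ 3 := by simp [Set.ncard_singleton]

lemma triple_ncard (a b c : V) : ({a, b, c} : Set V).ncard ≤ 3 := by
  calc ({a, b, c} : Set V).ncard ≤ ({b, c} : Set V).ncard + 1 := Set.ncard_insert_le _ _
    _ ≤ (({c} : Set V).ncard + 1) + 1 := by gcongr; exact Set.ncard_insert_le _ _
    _ ≤ 3 := by simp [Set.ncard_singleton]

lemma arc_trans (Γ : SimpleGraph V) (G : Subgroup (Γ ≃g Γ)) (hCH : IsCH3 Γ G)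
    {a b a' b' : V} (h : Γ.Adj a b) (h' : Γ.Adj a' b') :
    ∃ g ∈ G, (g : Γ ≃g Γ) a = a' ∧ (g : Γ ≃g Γ) b = b' := by
  classical
  have hab : a ≠ b := h.ne
  have hba : b ≠ a := h.ne'
  have hab' : a' ≠ b' := h'.ne
  have hba' : b' ≠ a' := h'.ne'
  have hmemB : ∀ x : V, (if x = a then a' else b') ∈ ({a', b'} : Set V) := by
    intro x; split_ifs <;> simp
  have hmemA : ∀ x : V, (if x = a' then a else b) ∈ ({a, b} : Set V) := by
    intro x; split_ifs <;> simp
  have hconnA : (SimpleGraph.induce ({a, b} : Set V) Γ).Connected := by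
    rw [SimpleGraph.connected_iff]
    refine ⟨?_, ⟨⟨a, by simp⟩⟩⟩
    have hr : ∀ z : ({a, b} : Set V),
        (SimpleGraph.induce ({a, b} : Set V) Γ).Reachable z ⟨a, by simp⟩ := by
      rintro ⟨z, hz⟩
      simp only [Set.mem_insert_iff, Set.mem_singleton_iff] at hz
      rcases hz with rfl | rfl
      · exact Reachable.refl _
      · exact SimpleGraph.Adj.reachable (by exact h.symm)
    intro x y
    exact (hr x).trans (hr y).symm
  obtain ⟨g, hgG, hg⟩ := hCH {a, b} {a', b'} (pair_ncard a b) hconnA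
    { toFun := fun x => ⟨if x.1 = a then a' else b', hmemB x.1⟩
      invFun := fun y => ⟨if y.1 = a' then a else b, hmemA y.1⟩
      left_inv := by
        rintro ⟨x, hx⟩
        simp only [Set.mem_insert_iff, Set.mem_singleton_iff] at hx
        apply Subtype.ext
        rcases hx with rfl | rfl
        · simp
        · simp [hba, hba']
      right_inv := by
        rintro ⟨y, hy⟩
        simp only [Set.mem_insert_iff, Set.mem_singleton_iff] at hy
        apply Subtype.ext
        rcases hy with rfl | rfl
        · simp
        · simp [hba', hba]
      map_rel_iff' := by
        rintro ⟨x, hx⟩ ⟨y, hy⟩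
        simp only [Set.mem_insert_iff, Set.mem_singleton_iff] at hx hy
        show Γ.Adj _ _ ↔ Γ.Adj _ _
        rcases hx with rfl | rfl <;> rcases hy with rfl | rfl <;>
          simp [hba, hba', h, h.symm, h', h'.symm] }
  refine ⟨g, hgG, ?_, ?_⟩
  · have := hg ⟨a, by simp⟩
    simpa using this
  · have := hg ⟨b, by simp⟩
    simpa [hba] using this

lemma path_trans (Γ : SimpleGraph V) (G : Subgroup (Γ ≃g Γ)) (hCH : IsCH3 Γ G)
    {a b c a' b' c' : V}
    (h1 : Γ.Adj b a) (h2 : Γ.Adj b c) (hac : a ≠ c) (hnac : ¬Γ.Adj a c)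
    (h1' : Γ.Adj b' a') (h2' : Γ.Adj b' c') (hac' : a' ≠ c') (hnac' : ¬Γ.Adj a' c') :
    ∃ g ∈ G, (g : Γ ≃g Γ) a = a' ∧ (g : Γ ≃g Γ) b = b' ∧ (g : Γ ≃g Γ) c = c' := by
  classical
  have hab : a ≠ b := h1.ne'
  have hba : b ≠ a := h1.ne
  have hbc : b ≠ c := h2.ne
  have hcb : c ≠ b := h2.ne'
  have hca : c ≠ a := hac.symm
  have hab' : a' ≠ b' := h1'.ne'
  have hba' : b' ≠ a' := h1'.ne
  have hbc' : b' ≠ c' := h2'.ne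
  have hcb' : c' ≠ b' := h2'.ne'
  have hca' : c' ≠ a' := hac'.symm
  have hnca : ¬Γ.Adj c a := fun h => hnac h.symm
  have hnca' : ¬Γ.Adj c' a' := fun h => hnac' h.symm
  have hmemB : ∀ x : V, (if x = a then a' else if x = b then b' else c') ∈
      ({a', b', c'} : Set V) := by
    intro x; split_ifs <;> simp
  have hmemA : ∀ x : V, (if x = a' then a else if x = b' then b else c) ∈
      ({a, b, c} : Set V) := by
    intro x; split_ifs <;> simp
  have hconnA : (SimpleGraph.induce ({a, b, c} : Set V) Γ).Connected := by
    rw [SimpleGraph.connected_iff]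
    refine ⟨?_, ⟨⟨b, by simp⟩⟩⟩
    have hr : ∀ z : ({a, b, c} : Set V),
        (SimpleGraph.induce ({a, b, c} : Set V) Γ).Reachable z ⟨b, by simp⟩ := by
      rintro ⟨z, hz⟩
      simp only [Set.mem_insert_iff, Set.mem_singleton_iff] at hz
      rcases hz with rfl | rfl | rfl
      · exact SimpleGraph.Adj.reachable (by exact h1.symm)
      · exact Reachable.refl _
      · exact SimpleGraph.Adj.reachable (by exact h2.symm)
    intro x y
    exact (hr x).trans (hr y).symm
  obtain ⟨g, hgG, hg⟩ := hCH {a, b, c} {a', b', c'} (triple_ncard a b c) hconnA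
    { toFun := fun x => ⟨if x.1 = a then a' else if x.1 = b then b' else c', hmemB x.1⟩
      invFun := fun y => ⟨if y.1 = a' then a else if y.1 = b' then b else c, hmemA y.1⟩
      left_inv := by
        rintro ⟨x, hx⟩
        simp only [Set.mem_insert_iff, Set.mem_singleton_iff] at hx
        apply Subtype.ext
        rcases hx with rfl | rfl | rfl
        · simp
        · simp [hba, hba']
        · simp [hca, hcb, hca', hcb']
      right_inv := by
        rintro ⟨y, hy⟩
        simp only [Set.mem_insert_iff, Set.mem_singleton_iff] at hy
        apply Subtype.ext
        rcases hy with rfl | rfl | rfl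
        · simp
        · simp [hba', hba]
        · simp [hca', hcb', hca, hcb]
      map_rel_iff' := by
        rintro ⟨x, hx⟩ ⟨y, hy⟩
        simp only [Set.mem_insert_iff, Set.mem_singleton_iff] at hx hy
        show Γ.Adj _ _ ↔ Γ.Adj _ _
        rcases hx with rfl | rfl | rfl <;> rcases hy with rfl | rfl | rfl <;>
          simp [hba, hca, hcb, hba', hca', hcb', h1, h1.symm, h2, h2.symm,
            h1', h1'.symm, h2', h2'.symm, hnac, hnca, hnac', hnca'] }
  refine ⟨g, hgG, ?_, ?_, ?_⟩
  · simpa using hg ⟨a, by simp⟩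
  · simpa [hba] using hg ⟨b, by simp⟩
  · simpa [hca, hcb] using hg ⟨c, by simp⟩

/-- The `N`-orbit relation on vertices. -/
def OrbRel (Γ : SimpleGraph V) (N : Subgroup (Γ ≃g Γ)) (x y : V) : Prop :=
  ∃ n ∈ N, (n : Γ ≃g Γ) x = y

lemma orbRel_refl (Γ : SimpleGraph V) (N : Subgroup (Γ ≃g Γ)) (x : V) :
    OrbRel Γ N x x := ⟨1, N.one_mem, rfl⟩

lemma orbRel_symm {Γ : SimpleGraph V} {N : Subgroup (Γ ≃g Γ)} {x y : V}
    (h : OrbRel Γ N x y) : OrbRel Γ N y x := by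
  obtain ⟨n, hn, rfl⟩ := h
  exact ⟨n⁻¹, N.inv_mem hn, n.symm_apply_apply x⟩

lemma orbRel_trans {Γ : SimpleGraph V} {N : Subgroup (Γ ≃g Γ)} {x y z : V}
    (h : OrbRel Γ N x y) (h' : OrbRel Γ N y z) : OrbRel Γ N x z := by
  obtain ⟨n, hn, rfl⟩ := h
  obtain ⟨m, hm, rfl⟩ := h'
  exact ⟨m * n, N.mul_mem hm hn, rfl⟩

lemma orbRel_smul {Γ : SimpleGraph V} {G N : Subgroup (Γ ≃g Γ)}
    (hnormal : ∀ g ∈ G, ∀ n ∈ N, g * n * g⁻¹ ∈ N) {g : Γ ≃g Γ} (hg : g ∈ G)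
    {x y : V} (h : OrbRel Γ N x y) : OrbRel Γ N (g x) (g y) := by
  obtain ⟨n, hn, rfl⟩ := h
  refine ⟨g * n * g⁻¹, hnormal g hg n hn, ?_⟩
  show g (n (g⁻¹ (g x))) = g (n x)
  rw [show (g⁻¹ : Γ ≃g Γ) (g x) = x from g.symm_apply_apply x]

/-- If some edge has endpoints in the same `N`-orbit, then (by arc-transitivity and
connectedness) all vertices lie in one orbit. -/
lemma all_orbRel_of_edge {Γ : SimpleGraph V} {G N : Subgroup (Γ ≃g Γ)}
    (hconn : Γ.Connected) (hCH : IsCH3 Γ G)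
    (hnormal : ∀ g ∈ G, ∀ n ∈ N, g * n * g⁻¹ ∈ N)
    {a b : V} (hab : Γ.Adj a b) (hab' : OrbRel Γ N a b) :
    ∀ x y : V, OrbRel Γ N x y := by
  have hedge : ∀ x y : V, Γ.Adj x y → OrbRel Γ N x y := by
    intro x y hxy
    obtain ⟨g, hgG, hga, hgb⟩ := arc_trans Γ G hCH hab hxy
    have := orbRel_smul hnormal hgG hab'
    rwa [hga, hgb] at this
  intro x y
  obtain ⟨wk⟩ := hconn.preconnected x y
  induction wk with
  | nil => exact orbRel_refl _ _ _
  | cons h p ih => exact orbRel_trans (hedge _ _ h) ih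

lemma key_lemma (Γ : SimpleGraph V) (G N : Subgroup (Γ ≃g Γ))
    (hconn : Γ.Connected) (hCH : IsCH3 Γ G)
    (hncm : ¬ _root_.IsCompleteMultipartite Γ)
    (hnormal : ∀ g ∈ G, ∀ n ∈ N, g * n * g⁻¹ ∈ N)
    (h3orb : ∃ v₁ v₂ v₃ : V, ¬ OrbRel Γ N v₁ v₂ ∧ ¬ OrbRel Γ N v₁ v₃ ∧
      ¬ OrbRel Γ N v₂ v₃) :
    ∀ u v w : V, Γ.Adj u v → Γ.Adj u w → OrbRel Γ N v w → w = v := by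
  intro u v w huv huw hrel
  by_contra hwv
  have hvw_ne : v ≠ w := fun h => hwv h.symm
  obtain ⟨v₁, v₂, v₃, h12, h13, h23⟩ := h3orb
  -- no edge joins two vertices of the same orbit
  have hintra : ∀ a b : V, Γ.Adj a b → ¬ OrbRel Γ N a b := by
    intro a b hab hab'
    exact h12 (all_orbRel_of_edge hconn hCH hnormal hab hab' v₁ v₂)
  -- hence v and w are non-adjacent
  have hvw : ¬ Γ.Adj v w := by
    intro h; exact hintra v w h hrel
  -- every 2-path with distinct non-adjacent endpoints has equivalent endpoints
  have HA : ∀ a b c : V, Γ.Adj b a → Γ.Adj b c → a ≠ c → ¬ Γ.Adj a c →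
      OrbRel Γ N a c := by
    intro a b c hba hbc hac hnac
    obtain ⟨g, hgG, hgv, hgu, hgw⟩ := path_trans Γ G hCH huv huw hvw_ne hvw hba hbc hac hnac
    have := orbRel_smul hnormal hgG hrel
    rwa [hgv, hgw] at this
  by_cases hβ : ∀ y c1 c2 : V, Γ.Adj y c1 → Γ.Adj y c2 → OrbRel Γ N c1 c2
  · -- all neighbourhoods inside a single orbit: at most two orbits, contradiction
    have hstep : ∀ x y' : V, Γ.Adj x y' →
        (OrbRel Γ N x u → OrbRel Γ N y' v) ∧ (OrbRel Γ N x v → OrbRel Γ N y' u) := by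
      intro x y' hxy
      constructor
      · rintro ⟨n, hn, hnx⟩
        have hadj : Γ.Adj u ((n : Γ ≃g Γ) y') := by
          have := (n : Γ ≃g Γ).map_adj_iff.mpr hxy
          rwa [hnx] at this
        exact orbRel_trans ⟨n, hn, rfl⟩ (hβ u _ v hadj huv)
      · rintro ⟨n, hn, hnx⟩
        have hadj : Γ.Adj v ((n : Γ ≃g Γ) y') := by
          have := (n : Γ ≃g Γ).map_adj_iff.mpr hxy
          rwa [hnx] at this
        exact orbRel_trans ⟨n, hn, rfl⟩ (hβ v _ u hadj huv.symm)
    have hP : ∀ x : V, OrbRel Γ N x u ∨ OrbRel Γ N x v := by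
      have main : ∀ (s t : V) (_ : Γ.Walk s t),
          (OrbRel Γ N s u ∨ OrbRel Γ N s v) → (OrbRel Γ N t u ∨ OrbRel Γ N t v) := by
        intro s t wk
        induction wk with
        | nil => exact id
        | cons h p ih =>
          intro hs
          apply ih
          rcases hs with hs | hs
          · exact Or.inr ((hstep _ _ h).1 hs)
          · exact Or.inl ((hstep _ _ h).2 hs)
      intro x
      obtain ⟨wk⟩ := hconn.preconnected u x
      exact main u x wk (Or.inl (orbRel_refl _ _ _))
    rcases hP v₁ with h1 | h1 <;> rcases hP v₂ with h2 | h2 <;> rcases hP v₃ with h3 | h3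
    · exact h12 (orbRel_trans h1 (orbRel_symm h2))
    · exact h12 (orbRel_trans h1 (orbRel_symm h2))
    · exact h13 (orbRel_trans h1 (orbRel_symm h3))
    · exact h23 (orbRel_trans h2 (orbRel_symm h3))
    · exact h23 (orbRel_trans h2 (orbRel_symm h3))
    · exact h13 (orbRel_trans h1 (orbRel_symm h3))
    · exact h12 (orbRel_trans h1 (orbRel_symm h2))
    · exact h12 (orbRel_trans h1 (orbRel_symm h2))
  · -- some vertex has neighbours in two distinct orbits
    push_neg at hβ
    obtain ⟨y0, c1, c2, hy1, hy2, hc12⟩ := hβ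
    have Lα : ∀ y x1 : V, Γ.Adj y x1 → ∃ c, Γ.Adj y c ∧ ¬ OrbRel Γ N c x1 := by
      intro y x1 hyx
      obtain ⟨g, hgG, hgy, hgc⟩ := arc_trans Γ G hCH hy1 hyx
      refine ⟨g c2, ?_, ?_⟩
      · have := g.map_adj_iff.mpr hy2
        rwa [hgy] at this
      · intro hcon
        apply hc12
        rw [← hgc] at hcon
        have := orbRel_smul hnormal (G.inv_mem hgG) hcon
        rw [show (g⁻¹ : Γ ≃g Γ) (g c2) = c2 from g.symm_apply_apply c2,
          show (g⁻¹ : Γ ≃g Γ) (g c1) = c1 from g.symm_apply_apply c1] at this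
        exact orbRel_symm this
    -- local "parts" propagate along edges
    have LP : ∀ p x1 x2 w' : V, Γ.Adj p x1 → Γ.Adj p x2 → Γ.Adj x1 x2 → Γ.Adj x1 w' →
        OrbRel Γ N w' p → Γ.Adj x2 w' := by
      intro p x1 x2 w' hpx1 hpx2 h12' h1w hwp
      have hne2 : w' ≠ x2 := by
        rintro rfl
        exact hintra p w' hpx2 (orbRel_symm hwp)
      by_contra hnadj
      have hwx2 : OrbRel Γ N w' x2 := HA w' x1 x2 h1w h12' hne2 (fun h => hnadj h.symm)
      exact hintra p x2 hpx2 (orbRel_trans (orbRel_symm hwp) hwx2)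
    -- the twin property for our configuration
    have htwin : ∀ v' w' : V, Γ.Adj u v' → Γ.Adj u w' → OrbRel Γ N v' w' → v' ≠ w' →
        ¬ Γ.Adj v' w' → ∀ x, Γ.Adj v' x → Γ.Adj x w' := by
      intro v' w' huv' huw' hrel' hne' hnadj' x hvx
      by_cases hxu : x = u
      · subst hxu; exact huw'
      by_cases hxadj : Γ.Adj x u
      · exact LP v' u x w' huv'.symm hvx hxadj.symm huw' (orbRel_symm hrel')
      · have hxu_rel : OrbRel Γ N x u := HA x v' u hvx huv'.symm hxu hxadj
        obtain ⟨c, hvc, hcu⟩ := Lα v' u huv'.symm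
        have hcu_ne : c ≠ u := fun h => hcu (h ▸ orbRel_refl Γ N u)
        have hcu_adj : Γ.Adj c u := by
          by_contra hn
          exact hcu (HA c v' u hvc huv'.symm hcu_ne hn)
        have hcx_ne : c ≠ x := fun h => hcu (h ▸ hxu_rel)
        have hcx_adj : Γ.Adj c x := by
          by_contra hn
          exact hcu (orbRel_trans (HA c v' x hvc hvx hcx_ne hn) hxu_rel)
        have h1 : Γ.Adj c w' := LP v' u c w' huv'.symm hvc hcu_adj.symm huw' (orbRel_symm hrel')
        exact LP v' c x w' hvc hvx hcx_adj h1 (orbRel_symm hrel')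
    have htwinV : ∀ x, Γ.Adj v x → Γ.Adj x w := htwin v w huv huw hrel hvw_ne hvw
    have htwinW : ∀ x, Γ.Adj w x → Γ.Adj x v :=
      htwin w v huw huv (orbRel_symm hrel) (Ne.symm hvw_ne) (fun h => hvw h.symm)
    -- any two non-adjacent vertices with a common neighbour are twins
    have LT : ∀ a b c x : V, Γ.Adj b a → Γ.Adj b c → a ≠ c → ¬ Γ.Adj a c →
        (Γ.Adj a x ↔ Γ.Adj c x) := by
      intro a b c x hba hbc hac hnac
      obtain ⟨g, hgG, hga, hgb, hgc⟩ := path_trans Γ G hCH hba hbc hac hnac huv huw hvw_ne hvw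
      constructor
      · intro hax
        have h1 : Γ.Adj v (g x) := by
          have := g.map_adj_iff.mpr hax
          rwa [hga] at this
        have h2 := htwinV _ h1
        rw [← hgc] at h2
        exact (g.map_adj_iff.mp h2).symm
      · intro hcx
        have h1 : Γ.Adj w (g x) := by
          have := g.map_adj_iff.mpr hcx
          rwa [hgc] at this
        have h2 := htwinW _ h1
        rw [← hga] at h2
        exact (g.map_adj_iff.mp h2).symm
    -- all distinct non-adjacent vertices are twins, by induction on walk length
    have C1 : ∀ k : ℕ, ∀ p q : V, ∀ wk : Γ.Walk p q, wk.length = k → p ≠ q →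
        ¬ Γ.Adj p q → ∀ x, (Γ.Adj p x ↔ Γ.Adj q x) := by
      intro k
      induction k using Nat.strong_induction_on with
      | _ k IH =>
        intro p q wk hlen hne hnadj x
        cases wk with
        | nil => exact absurd rfl hne
        | @cons _ b _ h1 rest =>
          cases rest with
          | nil => exact absurd h1 hnadj
          | @cons _ c _ h2 rest2 =>
            simp only [Walk.length_cons] at hlen
            by_cases hpc : p = c
            · subst hpc
              exact IH rest2.length (by omega) p q rest2 rfl hne hnadj x
            by_cases hpc2 : Γ.Adj p c
            · exact IH (rest2.length + 1) (by omega) p q (Walk.cons hpc2 rest2) rfl hne hnadj x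
            · have tw : ∀ z, Γ.Adj p z ↔ Γ.Adj c z := fun z => LT p b c z h1.symm h2 hpc hpc2
              cases rest2 with
              | nil => exact tw x
              | @cons _ d _ h3 rest3 =>
                have hpd : Γ.Adj p d := (tw d).mpr h3
                simp only [Walk.length_cons] at hlen
                exact IH (rest3.length + 1) (by omega) p q (Walk.cons hpd rest3) rfl hne hnadj x
    have twins : ∀ p q : V, p ≠ q → ¬ Γ.Adj p q → ∀ x, (Γ.Adj p x ↔ Γ.Adj q x) := by
      intro p q hne hnadj
      obtain ⟨wk⟩ := hconn.preconnected p q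
      exact C1 wk.length p q wk rfl hne hnadj
    -- and hence Γ is complete multipartite, a contradiction
    apply hncm
    intro p q r hpq hqr
    by_cases hpq' : p = q
    · subst hpq'; exact hqr
    by_cases hqr' : q = r
    · subst hqr'; exact hpq
    intro hpr
    exact hqr ((twins p q hpq' hpq r).mp hpr)

/-- **Theorem 1.4 (cover part).** Let `Γ` be a connected `(G,3)`-CH graph which is
not complete multipartite, and let `N ⊴ G` have at least three orbits on the
vertices.  Then for every edge `{u,v}` the `N`-orbit of `v` meets `Γ(u)` exactly in
`v`; consequently `Γ` is a cover of `Γ_N` (the quotient map is a bijection from each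
neighbourhood onto the corresponding quotient neighbourhood) and `N` is semiregular. -/
theorem quotient_cover_and_semiregular {V : Type*} [Fintype V]
    (Γ : SimpleGraph V) (G N : Subgroup (Γ ≃g Γ))
    (hconn : Γ.Connected) (hvt : VertexTrans Γ G) (hCH : IsCH3 Γ G)
    (hncm : ¬ _root_.IsCompleteMultipartite Γ)
    (hNG : N ≤ G) (hnormal : ∀ g ∈ G, ∀ n ∈ N, g * n * g⁻¹ ∈ N)
    (h3orb : ∃ v₁ v₂ v₃ : V, ¬ (orbSetoid N).r v₁ v₂ ∧ ¬ (orbSetoid N).r v₁ v₃ ∧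
      ¬ (orbSetoid N).r v₂ v₃) :
    (∀ u v w : V, Γ.Adj u v → Γ.Adj u w → (∃ n ∈ N, (n : Γ ≃g Γ) v = w) → w = v) ∧
    (∀ n ∈ N, (∃ v : V, (n : Γ ≃g Γ) v = v) → n = 1) ∧
    (∀ u : V, Set.BijOn (Quotient.mk (orbSetoid N)) (Γ.neighborSet u)
      ((quotGraph Γ N).neighborSet (Quotient.mk (orbSetoid N) u))) := by

  have h3orb' : ∃ v₁ v₂ v₃ : V, ¬ OrbRel Γ N v₁ v₂ ∧ ¬ OrbRel Γ N v₁ v₃ ∧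
      ¬ OrbRel Γ N v₂ v₃ := h3orb
  have key := key_lemma Γ G N hconn hCH hncm hnormal h3orb'
  obtain ⟨v₁, v₂, v₃, h12, h13, h23⟩ := h3orb'
  have hintra : ∀ a b : V, Γ.Adj a b → ¬ OrbRel Γ N a b := by
    intro a b hab hab'
    exact h12 (all_orbRel_of_edge hconn hCH hnormal hab hab' v₁ v₂)
  refine ⟨key, ?_, ?_⟩
  · -- semiregularity
    rintro n hn ⟨v0, hv0⟩
    have hfix : ∀ x : V, (n : Γ ≃g Γ) x = x := by
      have main : ∀ (s t : V) (_ : Γ.Walk s t),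
          (n : Γ ≃g Γ) s = s → (n : Γ ≃g Γ) t = t := by
        intro s t wk
        induction wk with
        | nil => exact id
        | @cons s y t h p ih =>
          intro hs
          apply ih
          have h1 : Γ.Adj s ((n : Γ ≃g Γ) y) := by
            have := (n : Γ ≃g Γ).map_adj_iff.mpr h
            rwa [hs] at this
          exact key s y ((n : Γ ≃g Γ) y) h h1 ⟨n, hn, rfl⟩
      intro x
      obtain ⟨wk⟩ := hconn.preconnected v0 x
      exact main v0 x wk hv0
    ext x
    exact hfix x
  · -- covering
    intro u
    refine ⟨?_, ?_, ?_⟩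
    · -- MapsTo
      intro v hv
      have hv : Γ.Adj u v := hv
      show (quotGraph Γ N).Adj _ _
      refine ⟨?_, u, v, hv, rfl, rfl⟩
      intro h
      exact hintra u v hv (Quotient.exact h)
    · -- InjOn
      intro a ha b hb h
      exact (key u a b ha hb (Quotient.exact h)).symm
    · -- SurjOn
      intro C hC
      obtain ⟨hne, a, b, hab, ha, hb⟩ := (hC : (quotGraph Γ N).Adj _ C)
      obtain ⟨m, hm, hma⟩ := (Quotient.exact ha : OrbRel Γ N a u)
      have hadj : Γ.Adj u ((m : Γ ≃g Γ) b) := by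
        have := (m : Γ ≃g Γ).map_adj_iff.mpr hab
        rwa [hma] at this
      refine ⟨(m : Γ ≃g Γ) b, hadj, ?_⟩
      rw [show Quotient.mk (orbSetoid N) ((m : Γ ≃g Γ) b) = Quotient.mk (orbSetoid N) b from
        Quotient.sound ⟨m⁻¹, N.inv_mem hm, m.symm_apply_apply b⟩, hb]
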